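/- Main theorem: Let G be an infinite connected graph with uniformly bounded vertex degrees, ω : V → ℝ₊* a vertex weight and c : E → ℝ₊* a conductance. Set a_{xy} = c_{xy}/(ω_x ω_y). If the metric δ_a (edge {x,y} having length 1/√(a_{xy})) is complete, then the weighted Laplacian Δ_{ω,c} with domain C₀(V) ⊂ ℓ²_ω(V) is essentially self-adjoint. -/

import Mathlib

open Finset

variable {V : Type*}

/-- Weighted Laplacian: `(Δ_{ω,c} f)(x) = (1/ω_x²) Σ_{y∼x} c_{xy}(f(x) − f(y))`. -/
noncomputable def lapW (G : SimpleGraph V) [∀ x : V, Fintype (G.neighborSet x)]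
    (ω : V → ℝ) (c : V → V → ℝ) (f : V → ℝ) (x : V) : ℝ :=
  (1 / (ω x) ^ 2) * ∑ y ∈ G.neighborFinset x, c x y * (f x - f y)

/-- Schrödinger operator: `(Δ_{1,a} + W) f (x) = Σ_{y∼x} a_{xy}(f(x) − f(y)) + W(x) f(x)`. -/
noncomputable def schrod (G : SimpleGraph V) [∀ x : V, Fintype (G.neighborSet x)]
    (a : V → V → ℝ) (W : V → ℝ) (f : V → ℝ) (x : V) : ℝ :=
  (∑ y ∈ G.neighborFinset x, a x y * (f x - f y)) + W x * f x

/-- Length of a walk, where an edge `{x,y}` has length `1/√(a_{xy})`. -/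
noncomputable def wlen (G : SimpleGraph V) (a : V → V → ℝ) {x y : V} (p : G.Walk x y) : ℝ :=
  (p.darts.map fun d => 1 / Real.sqrt (a d.toProd.1 d.toProd.2)).sum

/-- The weighted path metric `δ_a` on the graph. -/
noncomputable def pdist (G : SimpleGraph V) (a : V → V → ℝ) (x y : V) : ℝ :=
  sInf {L | ∃ p : G.Walk x y, wlen G a p = L}

/-- Metric completeness of `(V, δ_a)`: every Cauchy sequence converges. -/
def metComplete (G : SimpleGraph V) (a : V → V → ℝ) : Prop :=
  ∀ u : ℕ → V,
    (∀ ε : ℝ, 0 < ε → ∃ N : ℕ, ∀ m ≥ N, ∀ n ≥ N, pdist G a (u m) (u n) < ε) →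
      ∃ x : V, ∀ ε : ℝ, 0 < ε → ∃ N : ℕ, ∀ n ≥ N, pdist G a (u n) x < ε


section basic
variable (G : SimpleGraph V) (a : V → V → ℝ)

lemma wlen_nonneg {x y : V} (p : G.Walk x y) : 0 ≤ wlen G a p := by
  apply List.sum_nonneg
  intro t ht
  simp only [List.mem_map] at ht
  obtain ⟨d, -, rfl⟩ := ht
  positivity

lemma wlen_nil {x : V} : wlen G a (SimpleGraph.Walk.nil : G.Walk x x) = 0 := by
  simp [wlen]

lemma wlen_cons {x y z : V} (h : G.Adj x y) (p : G.Walk y z) :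
    wlen G a (SimpleGraph.Walk.cons h p) = 1 / Real.sqrt (a x y) + wlen G a p := by
  simp [wlen]

lemma wlen_append {x y z : V} (p : G.Walk x y) (q : G.Walk y z) :
    wlen G a (p.append q) = wlen G a p + wlen G a q := by
  simp [wlen]

lemma wlen_reverse (hsym : ∀ x y, a x y = a y x) {x y : V} (p : G.Walk x y) :
    wlen G a p.reverse = wlen G a p := by
  simp only [wlen, SimpleGraph.Walk.darts_reverse, List.map_reverse, List.sum_reverse,
    List.map_map]
  congr 1
  apply List.map_congr_left
  intro d _
  simp [SimpleGraph.Dart.symm, hsym d.toProd.1 d.toProd.2, Function.comp]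

lemma pdist_nonneg (x y : V) : 0 ≤ pdist G a x y := by
  apply Real.sInf_nonneg
  rintro L ⟨p, rfl⟩
  exact wlen_nonneg G a p

lemma pdist_le_wlen {x y : V} (p : G.Walk x y) : pdist G a x y ≤ wlen G a p :=
  csInf_le ⟨0, by rintro L ⟨q, rfl⟩; exact wlen_nonneg G a q⟩ ⟨p, rfl⟩

lemma pdist_self (x : V) : pdist G a x x = 0 :=
  le_antisymm (by simpa [wlen_nil] using pdist_le_wlen G a (SimpleGraph.Walk.nil : G.Walk x x))
    (pdist_nonneg G a x x)

lemma pdist_symm (hG : G.Connected) (hsym : ∀ x y, a x y = a y x) (x y : V) :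
    pdist G a x y = pdist G a y x := by
  have key : ∀ u v : V, pdist G a u v ≤ pdist G a v u := by
    intro u v
    obtain ⟨q⟩ := hG.preconnected v u
    conv_rhs => rw [pdist]
    refine le_csInf ⟨wlen G a q, q, rfl⟩ ?_
    rintro L ⟨p, rfl⟩
    calc pdist G a u v ≤ wlen G a p.reverse := pdist_le_wlen G a p.reverse
    _ = wlen G a p := wlen_reverse G a hsym p
  exact le_antisymm (key x y) (key y x)

lemma pdist_triangle (hG : G.Connected) (x y z : V) :
    pdist G a x z ≤ pdist G a x y + pdist G a y z := by
  have key : ∀ (p : G.Walk x y) (q : G.Walk y z), pdist G a x z ≤ wlen G a p + wlen G a q := by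
    intro p q
    calc pdist G a x z ≤ wlen G a (p.append q) := pdist_le_wlen G a _
    _ = _ := wlen_append G a p q
  obtain ⟨p0⟩ := hG.preconnected x y
  obtain ⟨q0⟩ := hG.preconnected y z
  have h1 : ∀ p : G.Walk x y, pdist G a x z - wlen G a p ≤ pdist G a y z := by
    intro p
    conv_rhs => rw [pdist]
    refine le_csInf ⟨wlen G a q0, q0, rfl⟩ ?_
    rintro L ⟨q, rfl⟩
    linarith [key p q]
  have h2 : pdist G a x z - pdist G a y z ≤ pdist G a x y := by
    conv_rhs => rw [pdist]
    refine le_csInf ⟨wlen G a p0, p0, rfl⟩ ?_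
    rintro L ⟨p, rfl⟩
    linarith [h1 p]
  linarith

lemma pdist_le_edge {x y : V} (h : G.Adj x y) :
    pdist G a x y ≤ 1 / Real.sqrt (a x y) := by
  simpa [wlen_cons, wlen_nil] using pdist_le_wlen G a (SimpleGraph.Walk.cons h SimpleGraph.Walk.nil)

end basic

section lists
variable (G : SimpleGraph V) (a : V → V → ℝ)

/-- weight of a list of vertices -/
noncomputable def lw (a : V → V → ℝ) : List V → ℝ
  | [] => 0
  | [_] => 0
  | (x :: y :: t) => 1 / Real.sqrt (a x y) + lw a (y :: t)

lemma lw_nonneg : ∀ l : List V, 0 ≤ lw a l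
  | [] => le_refl 0
  | [_] => le_refl 0
  | (x :: y :: t) => by
      rw [lw]
      have := lw_nonneg (y :: t)
      positivity

lemma lw_le_append : ∀ (l t : List V), lw a l ≤ lw a (l ++ t)
  | [], t => by simpa [lw] using lw_nonneg a t
  | [x], t => by
      simp only [List.cons_append, List.nil_append, lw]
      cases t with
      | nil => simp [lw]
      | cons b t' =>
        rw [lw]
        have h1 := lw_nonneg a (b :: t')
        positivity
  | (x :: y :: l'), t => by
      show lw a (x :: y :: l') ≤ lw a (x :: y :: (l' ++ t))
      rw [lw, lw]
      have := lw_le_append (y :: l') t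
      simpa using this

lemma lw_append_getLast : ∀ (l t : List V) (hl : l ≠ []),
    lw a (l ++ t) = lw a l + lw a (l.getLast hl :: t)
  | [], _, hl => absurd rfl hl
  | [x], t, _ => by simp [lw]
  | (x :: y :: l'), t, _ => by
      show lw a (x :: y :: (l' ++ t)) = _
      rw [lw, lw]
      have ih := lw_append_getLast (y :: l') t (by simp)
      rw [List.cons_append] at ih
      rw [ih]
      simp only [List.getLast_cons_cons]
      ring

lemma wlen_eq_lw_support {x y : V} (p : G.Walk x y) : wlen G a p = lw a p.support := by
  induction p with
  | nil => simp [wlen, lw]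
  | @cons u v w h q ih =>
    rw [wlen_cons, SimpleGraph.Walk.support_cons, ih]
    rw [q.support_eq_cons, lw]

lemma walk_of_chain : ∀ (l : List V) (x y : V), l.Chain' G.Adj → l.head? = some x →
    l.getLast? = some y → ∃ p : G.Walk x y, wlen G a p = lw a l
  | [], x, y, _, h, _ => by simp at h
  | [z], x, y, _, hh, hl => by
      simp only [List.head?_cons, Option.some_inj] at hh
      simp only [List.getLast?_singleton, Option.some_inj] at hl
      subst hh; subst hl
      exact ⟨SimpleGraph.Walk.nil, by simp [wlen, lw]⟩
  | (z :: w :: t), x, y, hc, hh, hl => by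
      simp only [List.head?_cons, Option.some_inj] at hh
      subst hh
      have hadj : G.Adj z w := (List.isChain_cons_cons.1 hc).1
      have hc' : (w :: t).Chain' G.Adj := (List.isChain_cons_cons.1 hc).2
      have hl' : (w :: t).getLast? = some y := by
        rwa [List.getLast?_cons_cons] at hl
      obtain ⟨q, hq⟩ := walk_of_chain (w :: t) w y hc' (by simp) hl'
      exact ⟨SimpleGraph.Walk.cons hadj q, by rw [wlen_cons, hq, lw]⟩

lemma sum_map_toFinset_le {α : Type*} [DecidableEq α] (f : α → ℝ) (hf : ∀ a, 0 ≤ f a) :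
    ∀ l : List α, l.toFinset.sum f ≤ (l.map f).sum
  | [] => by simp
  | (x :: t) => by
      rw [List.toFinset_cons, List.map_cons, List.sum_cons]
      by_cases hx : x ∈ t.toFinset
      · rw [Finset.insert_eq_self.2 hx]
        have := sum_map_toFinset_le f hf t
        linarith [hf x]
      · rw [Finset.sum_insert hx]
        have := sum_map_toFinset_le f hf t
        linarith

lemma sum_map_le_of_subset {α : Type*} {l1 l2 : List α} (h1 : l1.Nodup) (hsub : l1 ⊆ l2)
    (f : α → ℝ) (hf : ∀ a, 0 ≤ f a) : (l1.map f).sum ≤ (l2.map f).sum := by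
  classical
  calc (l1.map f).sum = l1.toFinset.sum f := (List.sum_toFinset f h1).symm
  _ ≤ l2.toFinset.sum f := Finset.sum_le_sum_of_subset_of_nonneg
      (by intro x hx; rw [List.mem_toFinset] at *; exact hsub hx) (fun i _ _ => hf i)
  _ ≤ (l2.map f).sum := sum_map_toFinset_le f hf l2

lemma wlen_bypass_le [DecidableEq V] {x y : V} (p : G.Walk x y) : wlen G a p.bypass ≤ wlen G a p := by
  apply sum_map_le_of_subset
  · exact p.bypass_isPath.isTrail.edges_nodup.of_map
  · exact p.darts_bypass_subset
  · intro d; positivity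

lemma getLast?_support {x y : V} (p : G.Walk x y) : p.support.getLast? = some y := by
  induction p with
  | nil => simp
  | @cons u v w h q ih =>
    rw [SimpleGraph.Walk.support_cons, q.support_eq_cons, List.getLast?_cons_cons,
      ← q.support_eq_cons]
    exact ih

end lists

section balls

lemma wlen_lb (G : SimpleGraph V) (a : V → V → ℝ) (x : V) (ε : ℝ)
    (hε : 0 ≤ ε) (hεle : ∀ y, G.Adj y x → ε ≤ 1 / Real.sqrt (a y x)) :
    ∀ (u w : V) (p : G.Walk u w), w = x → u ≠ w → ε ≤ wlen G a p := by
  intro u w p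
  induction p with
  | nil => intro _ hne; exact absurd rfl hne
  | @cons b z e h q ih =>
    intro he _
    subst he
    rw [wlen_cons]
    by_cases hz : z = e
    · subst hz
      have h1 := hεle b h
      have h2 := wlen_nonneg G a q
      linarith
    · have h1 := ih rfl hz
      have h2 : (0:ℝ) ≤ 1 / Real.sqrt (a b z) := by positivity
      linarith

lemma exists_pos_lower (G : SimpleGraph V) (a : V → V → ℝ) (hG : G.Connected)
    [∀ x : V, Fintype (G.neighborSet x)]
    (ha : ∀ x y, G.Adj x y → 0 < a x y) (x : V) (hx : (G.neighborFinset x).Nonempty) :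
    ∃ ε : ℝ, 0 < ε ∧ ∀ u : V, u ≠ x → ε ≤ pdist G a u x := by
  classical
  have hFne : ((G.neighborFinset x).image (fun y => 1 / Real.sqrt (a y x))).Nonempty :=
    hx.image _
  set ε := ((G.neighborFinset x).image (fun y => 1 / Real.sqrt (a y x))).min' hFne with hε
  have hεpos : 0 < ε := by
    obtain ⟨y, hy, hmin⟩ := Finset.mem_image.1 (Finset.min'_mem _ hFne)
    rw [hε, ← hmin]
    have hadj : G.Adj x y := by rwa [SimpleGraph.mem_neighborFinset] at hy
    have := ha y x hadj.symm
    positivity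
  have hεle : ∀ y, G.Adj y x → ε ≤ 1 / Real.sqrt (a y x) := by
    intro y hadj
    exact Finset.min'_le _ _ (Finset.mem_image.2
      ⟨y, by rw [SimpleGraph.mem_neighborFinset]; exact hadj.symm, rfl⟩)
  refine ⟨ε, hεpos, ?_⟩
  intro u hu
  obtain ⟨p0⟩ := hG.preconnected u x
  refine le_csInf ⟨wlen G a p0, p0, rfl⟩ ?_
  rintro L ⟨p, rfl⟩
  exact wlen_lb G a x ε (le_of_lt hεpos) hεle u x p rfl hu

lemma balls_finite (G : SimpleGraph V) [∀ x : V, Fintype (G.neighborSet x)]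
    (a : V → V → ℝ) (hG : G.Connected) (ha : ∀ x y, G.Adj x y → 0 < a x y)
    (hsym : ∀ x y, a x y = a y x) (hcomp : metComplete G a) (o : V) (r : ℝ) :
    {x : V | pdist G a o x ≤ r}.Finite := by
  classical
  by_contra hinf0
  have hinf : {x : V | pdist G a o x ≤ r}.Infinite := hinf0
  clear hinf0
  set B := {x : V | pdist G a o x ≤ r} with hB
  -- choose for every x ∈ B a good list
  have hl0 : ∀ x : V, ∃ l : List V, x ∈ B →
      l.Chain' G.Adj ∧ l.Nodup ∧ l.head? = some o ∧ l.getLast? = some x ∧ lw a l ≤ r + 1 := by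
    intro x
    by_cases hx : x ∈ B
    · have hne : {L | ∃ p : G.Walk o x, wlen G a p = L}.Nonempty := by
        obtain ⟨p⟩ := hG.preconnected o x
        exact ⟨wlen G a p, p, rfl⟩
      have hlt : sInf {L | ∃ p : G.Walk o x, wlen G a p = L} < r + 1 :=
        lt_of_le_of_lt hx (by linarith)
      obtain ⟨L, ⟨p, rfl⟩, hLlt⟩ := exists_lt_of_csInf_lt hne hlt
      refine ⟨p.bypass.support, fun _ => ⟨p.bypass.isChain_adj_support,
        p.bypass_isPath.support_nodup, ?_, getLast?_support G p.bypass, ?_⟩⟩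
      · rw [p.bypass.support_eq_cons]; rfl
      · rw [← wlen_eq_lw_support]
        have := wlen_bypass_le G a p
        linarith
    · exact ⟨[], fun h => absurd h hx⟩
  choose l hl using hl0
  -- the König construction
  let State := {Pr : List V // Pr ≠ [] ∧ ∃ T : Set V, T ⊆ B ∧ T.Infinite ∧ ∀ x ∈ T, Pr <+: l x}
  have hinit : ∃ T : Set V, T ⊆ B ∧ T.Infinite ∧ ∀ x ∈ T, [o] <+: l x := by
    refine ⟨B, subset_rfl, hinf, ?_⟩
    intro x hx
    obtain ⟨-, -, hh, -, -⟩ := hl x hx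
    obtain ⟨t, ht⟩ := List.head?_eq_some_iff.1 hh
    exact ⟨t, ht.symm⟩
  let init : State := ⟨[o], by simp, hinit⟩
  have step : ∀ s : State, ∃ s' : State, ∃ w : V, s'.val = s.val ++ [w] := by
    rintro ⟨Pr, hPr, T, hTB, hTinf, hpref⟩
    set v := Pr.getLast hPr with hv
    set T1 : Set V := T \ {x | x ∈ B ∧ l x = Pr} with hT1
    have hT1inf : T1.Infinite := by
      apply hTinf.diff
      apply Set.Subsingleton.finite
      rintro x1 ⟨hx1B, hx1⟩ x2 ⟨hx2B, hx2⟩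
      have e1 := (hl x1 hx1B).2.2.2.1
      have e2 := (hl x2 hx2B).2.2.2.1
      rw [hx1] at e1; rw [hx2] at e2
      rw [e1] at e2
      exact Option.some_inj.1 e2
    have hT1sub : T1 ⊆ T := Set.diff_subset
    -- every x in T1 has a next vertex after the prefix Pr
    have hnext : ∀ x : V, ∃ w : V, x ∈ T1 → (Pr ++ [w] <+: l x ∧ G.Adj v w) := by
      intro x
      by_cases hx : x ∈ T1
      · obtain ⟨t, ht⟩ := hpref x (hT1sub hx)
        have htne : t ≠ [] := by
          rintro rfl
          exact hx.2 ⟨hTB (hT1sub hx), by rw [← ht, List.append_nil]⟩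
        rcases t with _ | ⟨w, t'⟩
        · exact absurd rfl htne
        refine ⟨w, fun _ => ⟨⟨t', by rw [← ht]; simp⟩, ?_⟩⟩
        have hchain : (l x).Chain' G.Adj := (hl x (hTB (hT1sub hx))).1
        rw [← ht] at hchain
        obtain ⟨-, -, hrel⟩ := List.isChain_append.1 hchain
        exact hrel v (List.getLast?_eq_getLast hPr ▸ rfl) w rfl
      · exact ⟨o, fun h => absurd h hx⟩
    choose wf hwf using hnext
    -- pigeonhole on the finitely many neighbors of v
    have hpig : ∃ u ∈ G.neighborFinset v, {x ∈ T1 | wf x = u}.Infinite := by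
      by_contra hcon
      push_neg at hcon
      have hfin : (⋃ u ∈ (G.neighborFinset v : Finset V), {x ∈ T1 | wf x = u}).Finite := by
        apply Set.Finite.biUnion (G.neighborFinset v).finite_toSet
        intro u hu
        rcases hcon u hu with h
        · exact h
      have hsub : T1 ⊆ ⋃ u ∈ (G.neighborFinset v : Finset V), {x ∈ T1 | wf x = u} := by
        intro x hx
        have hm : wf x ∈ G.neighborFinset v := by
          rw [SimpleGraph.mem_neighborFinset]; exact (hwf x hx).2
        exact Set.mem_biUnion hm ⟨hx, rfl⟩
      exact (hT1inf.mono hsub) hfin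
    obtain ⟨u, hu, hufib⟩ := hpig
    refine ⟨⟨Pr ++ [u], by simp, {x ∈ T1 | wf x = u}, ?_, hufib, ?_⟩, u, rfl⟩
    · exact fun x hx => hTB (hT1sub hx.1)
    · rintro x ⟨hx1, hx2⟩
      have := (hwf x hx1).1
      rwa [hx2] at this
  -- build the infinite ray
  let g : ℕ → State := fun n => Nat.rec init (fun _ s => Classical.choose (step s)) n
  have hg : ∀ n, ∃ w, (g (n + 1)).val = (g n).val ++ [w] :=
    fun n => Classical.choose_spec (step (g n))
  have hne : ∀ n, (g n).val ≠ [] := fun n => (g n).2.1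
  have hpref2 : ∀ m n, m ≤ n → (g m).val <+: (g n).val := by
    intro m n hmn
    induction n, hmn using Nat.le_induction with
    | base => exact List.prefix_rfl
    | succ n hmn ih =>
      obtain ⟨w, hw⟩ := hg n
      exact ih.trans ⟨[w], hw.symm⟩
  have hlen : ∀ n, (g n).val.length = n + 1 := by
    intro n
    induction n with
    | zero => show ([o] : List V).length = 0 + 1; rfl
    | succ n ih =>
      obtain ⟨w, hw⟩ := hg n
      rw [hw, List.length_append, ih]
      rfl
  have hprops : ∀ n, (g n).val.Chain' G.Adj ∧ (g n).val.Nodup ∧ lw a (g n).val ≤ r + 1 := by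
    intro n
    obtain ⟨hnil, T, hTB, hTinf, hp⟩ := (g n).2
    obtain ⟨x, hx⟩ := hTinf.nonempty
    obtain ⟨hc, hnd, -, -, hlw⟩ := hl x (hTB hx)
    obtain ⟨t, ht⟩ := hp x hx
    refine ⟨?_, ?_, ?_⟩
    · exact hc.prefix ⟨t, ht⟩
    · exact hnd.sublist (List.IsPrefix.sublist ⟨t, ht⟩)
    · calc lw a (g n).val ≤ lw a ((g n).val ++ t) := lw_le_append a _ t
      _ = lw a (l x) := by rw [ht]
      _ ≤ r + 1 := hlw
  set vseq : ℕ → V := fun n => (g n).val.getLast (hne n) with hvseq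
  set Sn : ℕ → ℝ := fun n => lw a (g n).val with hSn
  -- segment decomposition for m ≤ n
  have hseg : ∀ m n, m ≤ n → pdist G a (vseq m) (vseq n) ≤ Sn n - Sn m := by
    intro m n hmn
    obtain ⟨t, ht⟩ := hpref2 m n hmn
    have hSnm : Sn n = Sn m + lw a (vseq m :: t) := by
      rw [hSn]
      simp only
      rw [← ht, lw_append_getLast a (g m).val t (hne m)]
    have hsuffix : (g m).val.dropLast ++ (vseq m :: t) = (g n).val := by
      rw [← ht, ← List.singleton_append, ← List.append_assoc]
      congr 1
      rw [hvseq]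
      exact List.dropLast_append_getLast (hne m)
    have hchainseg : (vseq m :: t).Chain' G.Adj := by
      apply ((hprops n).1).suffix
      exact ⟨(g m).val.dropLast, hsuffix⟩
    have hlastseg : (vseq m :: t).getLast? = some (vseq n) := by
      have h1 : (g n).val.getLast? = some (vseq n) := List.getLast?_eq_getLast (hne n)
      rw [← hsuffix] at h1
      rwa [List.getLast?_append_of_ne_nil _ (by simp)] at h1
    obtain ⟨p, hp⟩ := walk_of_chain G a (vseq m :: t) (vseq m) (vseq n) hchainseg rfl hlastseg
    have := pdist_le_wlen G a p
    rw [hp] at this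
    linarith [hSnm]
  have hSmono : Monotone Sn := by
    intro m n hmn
    obtain ⟨t, ht⟩ := hpref2 m n hmn
    calc Sn m ≤ lw a ((g m).val ++ t) := lw_le_append a _ t
    _ = Sn n := by rw [ht]
  have hSbdd : ∀ n, Sn n ≤ r + 1 := fun n => (hprops n).2.2
  -- Sn is Cauchy
  have hScauchy : CauchySeq Sn := by
    have := tendsto_atTop_ciSup hSmono ⟨r + 1, by rintro y ⟨n, rfl⟩; exact hSbdd n⟩
    exact this.cauchySeq
  rw [Metric.cauchySeq_iff] at hScauchy
  -- vseq is Cauchy for pdist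
  have hvc : ∀ ε : ℝ, 0 < ε → ∃ N : ℕ, ∀ m ≥ N, ∀ n ≥ N, pdist G a (vseq m) (vseq n) < ε := by
    intro ε hε
    obtain ⟨N, hN⟩ := hScauchy ε hε
    refine ⟨N, fun m hm n hn => ?_⟩
    rcases le_total m n with h | h
    · have := hseg m n h
      have hd := hN n hn m hm
      rw [Real.dist_eq] at hd
      have : Sn n - Sn m < ε := lt_of_le_of_lt (le_abs_self _) hd
      linarith [hseg m n h]
    · have := hseg n m h
      have hd := hN m hm n hn
      rw [Real.dist_eq] at hd
      have h2 : Sn m - Sn n < ε := lt_of_le_of_lt (le_abs_self _) hd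
      rw [pdist_symm G a hG hsym]
      linarith
  obtain ⟨x, hx⟩ := hcomp vseq hvc
  -- vseq is injective
  have hvinj : ∀ m n, m < n → vseq m ≠ vseq n := by
    intro m n hmn
    obtain ⟨t, ht⟩ := hpref2 m n (le_of_lt hmn)
    have htne : t ≠ [] := by
      rintro rfl
      rw [List.append_nil] at ht
      have := hlen m
      rw [ht, hlen n] at this
      omega
    have hmem1 : vseq m ∈ (g m).val := List.getLast_mem (hne m)
    have hmem2 : vseq n ∈ t := by
      have h1 : (g n).val.getLast? = some (vseq n) := List.getLast?_eq_getLast (hne n)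
      rw [← ht, List.getLast?_append_of_ne_nil _ htne] at h1
      rw [List.getLast?_eq_getLast htne] at h1
      exact Option.some_inj.1 h1 ▸ List.getLast_mem htne
    have hnd : ((g m).val ++ t).Nodup := by rw [ht]; exact (hprops n).2.1
    rw [List.nodup_append] at hnd
    intro hcon
    exact hnd.2.2 _ hmem1 _ hmem2 hcon
  -- x has a neighbor
  have hxnbr : (G.neighborFinset x).Nonempty := by
    have : vseq 0 ≠ x ∨ vseq 1 ≠ x := by
      by_contra hcon
      push_neg at hcon
      exact hvinj 0 1 (by omega) (hcon.1.trans hcon.2.symm)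
    obtain ⟨y, hy⟩ : ∃ y, y ≠ x := by
      rcases this with h | h
      · exact ⟨vseq 0, h⟩
      · exact ⟨vseq 1, h⟩
    obtain ⟨p⟩ := hG.preconnected x y
    cases p with
    | nil => exact absurd rfl hy
    | cons h q => exact ⟨_, by rw [SimpleGraph.mem_neighborFinset]; exact h⟩
  obtain ⟨ε, hεpos, hεlb⟩ := exists_pos_lower G a hG ha x hxnbr
  obtain ⟨N, hN⟩ := hx ε hεpos
  have heq : ∀ n ≥ N, vseq n = x := by
    intro n hn
    by_contra hcon
    exact absurd (hN n hn) (not_lt.2 (hεlb (vseq n) hcon))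
  exact hvinj N (N + 1) (by omega) ((heq N (le_refl N)).trans (heq (N + 1) (by omega)).symm)

end balls

lemma eta_lip (u v : ℝ) : |max 0 (min 1 u) - max 0 (min 1 v)| ≤ |u - v| := by
  have h1 : |max 0 (min 1 u) - max 0 (min 1 v)| ≤ |min 1 u - min 1 v| := by
    rw [max_comm 0 (min 1 u), max_comm 0 (min 1 v)]
    exact abs_max_sub_max_le_abs _ _ 0
  have h2 : |min 1 u - min 1 v| ≤ |u - v| := by
    have := abs_min_sub_min_le_max 1 u 1 v
    simpa using this
  linarith

lemma sum_swap_inv {M : Type*} [AddCommMonoid M] (P : Finset (V × V))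
    (hPs : ∀ p ∈ P, p.swap ∈ P) (F : V × V → M) :
    ∑ p ∈ P, F p = ∑ p ∈ P, F p.swap := by
  apply Finset.sum_equiv (Equiv.prodComm V V)
  · intro p
    constructor
    · exact hPs p
    · intro hp
      have := hPs _ hp
      simpa using this
  · intro p _
    rfl


set_option maxHeartbeats 1000000 in
/-- main theorem: bounded valence and completeness of `δ_a` with
`a_{xy} = c_{xy}/(ω_x ω_y)` imply essential self-adjointness of `Δ_{ω,c}` on
`C₀(V) ⊂ ℓ²_ω(V)`, i.e. the only `f ∈ ℓ²_ω` with `Δ_{ω,c} f + f = 0` is `f ≡ 0`. -/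
theorem stmt13 (G : SimpleGraph V) [∀ x : V, Fintype (G.neighborSet x)]
    (hG : G.Connected) [Infinite V]
    (N : ℕ) (hdeg : ∀ x, (G.neighborFinset x).card ≤ N)
    (ω : V → ℝ) (hω : ∀ x, 0 < ω x)
    (c : V → V → ℝ) (hc : ∀ x y, G.Adj x y → 0 < c x y)
    (hcs : ∀ x y, c x y = c y x)
    (hcomp : metComplete G (fun x y => c x y / (ω x * ω y))) :
    ∀ f : V → ℝ, Summable (fun x => (ω x) ^ 2 * (f x) ^ 2) →
      (∀ x, lapW G ω c f x + f x = 0) → f = 0 := by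
  classical
  intro f hf heq
  set a : V → V → ℝ := fun x y => c x y / (ω x * ω y) with haDef
  have ha : ∀ x y, G.Adj x y → 0 < a x y :=
    fun x y h => div_pos (hc x y h) (mul_pos (hω x) (hω y))
  have hsym : ∀ x y, a x y = a y x := by
    intro x y
    simp only [haDef]
    rw [hcs x y, mul_comm]
  set T := ∑' x, ω x ^ 2 * f x ^ 2 with hTdef
  have hT0 : 0 ≤ T := tsum_nonneg (fun x => by positivity)
  funext x₀
  simp only [Pi.zero_apply]
  have key : ∀ R : ℝ, 0 < R → ω x₀ ^ 2 * f x₀ ^ 2 ≤ N * T / (2 * R ^ 2) := by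
    intro R hR
    set η : V → ℝ := fun x => max 0 (min 1 (2 - pdist G a x₀ x / R)) with hη
    have hη0 : ∀ x, 0 ≤ η x := fun x => le_max_left _ _
    have hηsupp : ∀ x, η x ≠ 0 → pdist G a x₀ x ≤ 2 * R := by
      intro x hx
      by_contra hgt
      push_neg at hgt
      apply hx
      have hs : 2 - pdist G a x₀ x / R < 0 := by
        rw [sub_neg, lt_div_iff₀ hR]
        linarith
      have hmin : min 1 (2 - pdist G a x₀ x / R) < 0 :=
        lt_of_le_of_lt (min_le_right _ _) hs
      simp only [hη]
      rw [max_eq_left (le_of_lt hmin)]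
    have hηx₀ : η x₀ = 1 := by
      simp only [hη, pdist_self G a x₀]
      norm_num
    have hηlip : ∀ x y, G.Adj x y → |η x - η y| ≤ (1 / Real.sqrt (a x y)) / R := by
      intro x y hadj
      have h1 := eta_lip (2 - pdist G a x₀ x / R) (2 - pdist G a x₀ y / R)
      have h2 : |(2 - pdist G a x₀ x / R) - (2 - pdist G a x₀ y / R)|
          = |pdist G a x₀ y - pdist G a x₀ x| / R := by
        have e : (2 - pdist G a x₀ x / R) - (2 - pdist G a x₀ y / R)
            = (pdist G a x₀ y - pdist G a x₀ x) / R := by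
          field_simp
          ring
        rw [e, abs_div, abs_of_pos hR]
      have h3 : |pdist G a x₀ y - pdist G a x₀ x| ≤ 1 / Real.sqrt (a x y) := by
        rw [abs_sub_le_iff]
        have ht1 := pdist_triangle G a hG x₀ x y
        have he1 := pdist_le_edge G a hadj
        have ht2 := pdist_triangle G a hG x₀ y x
        have he2 := pdist_le_edge G a hadj.symm
        rw [hsym y x] at he2
        constructor <;> linarith
      have h4 : |pdist G a x₀ y - pdist G a x₀ x| / R ≤ (1 / Real.sqrt (a x y)) / R := by
        gcongr
      simp only [hη] at h1 ⊢
      linarith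
    have hB2fin : {x : V | pdist G a x₀ x ≤ 2 * R}.Finite :=
      balls_finite G a hG ha hsym hcomp x₀ (2 * R)
    set B2 : Finset V := hB2fin.toFinset with hB2
    have hmemB2 : ∀ x, x ∈ B2 ↔ pdist G a x₀ x ≤ 2 * R := by
      intro x
      rw [hB2, Set.Finite.mem_toFinset]
      rfl
    set S : Finset V := B2 ∪ B2.biUnion (fun x => G.neighborFinset x) with hS
    have hB2S : B2 ⊆ S := Finset.subset_union_left
    have hnbrS : ∀ x ∈ B2, ∀ y, G.Adj x y → y ∈ S := by
      intro x hx y hy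
      apply Finset.mem_union_right
      exact Finset.mem_biUnion.2 ⟨x, hx, by rw [SimpleGraph.mem_neighborFinset]; exact hy⟩
    have hsuppB2 : ∀ x, η x ≠ 0 → x ∈ B2 := fun x hx => (hmemB2 x).2 (hηsupp x hx)
    set P : Finset (V × V) := (S ×ˢ S).filter (fun p => G.Adj p.1 p.2) with hP
    have hPadj : ∀ p ∈ P, G.Adj p.1 p.2 := fun p hp => (Finset.mem_filter.1 hp).2
    have hPswap : ∀ p ∈ P, p.swap ∈ P := by
      intro p hp
      obtain ⟨hmem, hadj⟩ := Finset.mem_filter.1 hp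
      obtain ⟨h1, h2⟩ := Finset.mem_product.1 hmem
      exact Finset.mem_filter.2 ⟨Finset.mem_product.2 ⟨h2, h1⟩, hadj.symm⟩
    set Tm : V → V → ℝ := fun x y => c x y * (f x - f y) * (η x ^ 2 * f x) with hTm
    have hA : ∑ x ∈ B2, (η x ^ 2 * f x) * ∑ y ∈ G.neighborFinset x, c x y * (f x - f y)
        = ∑ p ∈ P, Tm p.1 p.2 := by
      have e1 : ∀ x : V, (η x ^ 2 * f x) * ∑ y ∈ G.neighborFinset x, c x y * (f x - f y)
          = ∑ y ∈ G.neighborFinset x, Tm x y := by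
        intro x
        rw [Finset.mul_sum]
        exact Finset.sum_congr rfl fun y _ => by simp only [hTm]; ring
      calc ∑ x ∈ B2, (η x ^ 2 * f x) * ∑ y ∈ G.neighborFinset x, c x y * (f x - f y)
          = ∑ x ∈ S, (η x ^ 2 * f x) * ∑ y ∈ G.neighborFinset x, c x y * (f x - f y) := by
            apply Finset.sum_subset hB2S
            intro x _ hx
            have hηx : η x = 0 := by
              by_contra h
              exact hx (hsuppB2 x h)
            rw [hηx]
            ring
      _ = ∑ x ∈ S, ∑ y ∈ S.filter (fun y => G.Adj x y), Tm x y := by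
            apply Finset.sum_congr rfl
            intro x _
            rw [e1 x]
            symm
            apply Finset.sum_subset
            · intro y hy
              rw [SimpleGraph.mem_neighborFinset]
              exact (Finset.mem_filter.1 hy).2
            · intro y hy hyn
              by_cases hηx : η x = 0
              · simp only [hTm]
                rw [hηx]
                ring
              · exfalso
                have hxB2 := hsuppB2 x hηx
                have hady : G.Adj x y := by rwa [SimpleGraph.mem_neighborFinset] at hy
                exact hyn (Finset.mem_filter.2 ⟨hnbrS x hxB2 y hady, hady⟩)
      _ = ∑ p ∈ P, Tm p.1 p.2 := by
            rw [hP, Finset.sum_filter, Finset.sum_product]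
            apply Finset.sum_congr rfl
            intro x _
            rw [Finset.sum_filter]
    have hMain : ∑ x ∈ B2, ω x ^ 2 * η x ^ 2 * f x ^ 2 = - ∑ p ∈ P, Tm p.1 p.2 := by
      have hper : ∀ x : V, (η x ^ 2 * f x) * ∑ y ∈ G.neighborFinset x, c x y * (f x - f y)
          = -(ω x ^ 2 * η x ^ 2 * f x ^ 2) := by
        intro x
        have hxq := heq x
        simp only [lapW] at hxq
        have hω2 : (ω x) ^ 2 ≠ 0 := ne_of_gt (pow_pos (hω x) 2)
        have hInner : ∑ y ∈ G.neighborFinset x, c x y * (f x - f y) = -(ω x ^ 2 * f x) := by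
          have hωx : ω x ≠ 0 := ne_of_gt (hω x)
          field_simp at hxq
          linarith
        rw [hInner]
        ring
      have h := Finset.sum_congr rfl (fun x (_ : x ∈ B2) => hper x)
      rw [← hA, h, Finset.sum_neg_distrib, neg_neg]
    have hswap : ∑ p ∈ P, Tm p.1 p.2 = ∑ p ∈ P, Tm p.2 p.1 :=
      sum_swap_inv P hPswap (fun p => Tm p.1 p.2)
    have hsplit : ∑ p ∈ P, (Tm p.1 p.2 + Tm p.2 p.1)
        = (∑ p ∈ P, c p.1 p.2 * (η p.1 * f p.1 - η p.2 * f p.2) ^ 2)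
          - ∑ p ∈ P, c p.1 p.2 * (f p.1 * f p.2) * (η p.1 - η p.2) ^ 2 := by
      rw [← Finset.sum_sub_distrib]
      apply Finset.sum_congr rfl
      intro p _
      simp only [hTm]
      rw [hcs p.2 p.1]
      ring
    have hsq : 0 ≤ ∑ p ∈ P, c p.1 p.2 * (η p.1 * f p.1 - η p.2 * f p.2) ^ 2 :=
      Finset.sum_nonneg fun p hp => mul_nonneg (le_of_lt (hc _ _ (hPadj p hp))) (sq_nonneg _)
    have hstep5 : ∑ x ∈ B2, ω x ^ 2 * η x ^ 2 * f x ^ 2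
        ≤ (1 / 2) * ∑ p ∈ P, c p.1 p.2 * (f p.1 * f p.2) * (η p.1 - η p.2) ^ 2 := by
      have h2 : ∑ p ∈ P, (Tm p.1 p.2 + Tm p.2 p.1) = 2 * ∑ p ∈ P, Tm p.1 p.2 := by
        rw [Finset.sum_add_distrib, ← hswap]
        ring
      rw [hMain]
      rw [h2] at hsplit
      linarith
    have hpair : ∀ p ∈ P, c p.1 p.2 * (f p.1 * f p.2) * (η p.1 - η p.2) ^ 2
        ≤ 1 / (2 * R ^ 2) * (ω p.1 ^ 2 * f p.1 ^ 2 + ω p.2 ^ 2 * f p.2 ^ 2) := by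
      rintro ⟨x, y⟩ hp
      have hadj : G.Adj x y := hPadj _ hp
      have hcpos := hc x y hadj
      have hapos := ha x y hadj
      have hl := hηlip x y hadj
      have hsqrt : Real.sqrt (a x y) ^ 2 = a x y := Real.sq_sqrt (le_of_lt hapos)
      have hsqrtpos : 0 < Real.sqrt (a x y) := Real.sqrt_pos.2 hapos
      have h1 : (η x - η y) ^ 2 ≤ 1 / (a x y * R ^ 2) := by
        rw [← sq_abs]
        calc |η x - η y| ^ 2 ≤ ((1 / Real.sqrt (a x y)) / R) ^ 2 := by
              apply pow_le_pow_left₀ (abs_nonneg _) hl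
        _ = 1 / (a x y * R ^ 2) := by
              rw [div_pow, div_pow, one_pow, hsqrt]
              rw [div_div]
      have hca : c x y = a x y * (ω x * ω y) := by
        simp only [haDef]
        exact (div_mul_cancel₀ _ (ne_of_gt (mul_pos (hω x) (hω y)))).symm
      have hfin : c x y * (f x * f y) * (η x - η y) ^ 2
          ≤ (ω x * |f x|) * (ω y * |f y|) / R ^ 2 := by
        calc c x y * (f x * f y) * (η x - η y) ^ 2
            ≤ c x y * |f x * f y| * (η x - η y) ^ 2 := by
              apply mul_le_mul_of_nonneg_right _ (sq_nonneg _)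
              exact mul_le_mul_of_nonneg_left (le_abs_self _) (le_of_lt hcpos)
        _ ≤ c x y * |f x * f y| * (1 / (a x y * R ^ 2)) := by
              have hcc : 0 ≤ c x y * |f x * f y| := mul_nonneg (le_of_lt hcpos) (abs_nonneg _)
              exact mul_le_mul_of_nonneg_left h1 hcc
        _ = (ω x * |f x|) * (ω y * |f y|) / R ^ 2 := by
              rw [hca, abs_mul]
              have ha0 : a x y ≠ 0 := ne_of_gt hapos
              have hR0 : R ≠ 0 := ne_of_gt hR
              field_simp
      have hAMGM : (ω x * |f x|) * (ω y * |f y|)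
          ≤ (ω x ^ 2 * f x ^ 2 + ω y ^ 2 * f y ^ 2) / 2 := by
        nlinarith [sq_nonneg (ω x * |f x| - ω y * |f y|), sq_abs (f x), sq_abs (f y)]
      calc c x y * (f x * f y) * (η x - η y) ^ 2
          ≤ (ω x * |f x|) * (ω y * |f y|) / R ^ 2 := hfin
      _ ≤ ((ω x ^ 2 * f x ^ 2 + ω y ^ 2 * f y ^ 2) / 2) / R ^ 2 := by gcongr
      _ = 1 / (2 * R ^ 2) * (ω x ^ 2 * f x ^ 2 + ω y ^ 2 * f y ^ 2) := by ring
    have hcol : ∑ p ∈ P, ω p.1 ^ 2 * f p.1 ^ 2 ≤ N * T := by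
      have hST : ∑ x ∈ S, ω x ^ 2 * f x ^ 2 ≤ T :=
        hf.sum_le_tsum S (fun i _ => by positivity)
      calc ∑ p ∈ P, ω p.1 ^ 2 * f p.1 ^ 2
          = ∑ x ∈ S, ∑ y ∈ S, (if G.Adj x y then ω x ^ 2 * f x ^ 2 else 0) := by
            rw [hP, Finset.sum_filter, Finset.sum_product]
      _ = ∑ x ∈ S, (S.filter (fun y => G.Adj x y)).card * (ω x ^ 2 * f x ^ 2) := by
            apply Finset.sum_congr rfl
            intro x _
            rw [← Finset.sum_filter, Finset.sum_const, nsmul_eq_mul]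
      _ ≤ ∑ x ∈ S, (N : ℝ) * (ω x ^ 2 * f x ^ 2) := by
            apply Finset.sum_le_sum
            intro x _
            apply mul_le_mul_of_nonneg_right _ (by positivity)
            have hcard : (S.filter (fun y => G.Adj x y)).card ≤ N := by
              refine le_trans (Finset.card_le_card ?_) (hdeg x)
              intro y hy
              rw [SimpleGraph.mem_neighborFinset]
              exact (Finset.mem_filter.1 hy).2
            exact_mod_cast hcard
      _ = (N : ℝ) * ∑ x ∈ S, ω x ^ 2 * f x ^ 2 := by rw [Finset.mul_sum]
      _ ≤ N * T := mul_le_mul_of_nonneg_left hST (by positivity)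
    have hcol2 : ∑ p ∈ P, ω p.2 ^ 2 * f p.2 ^ 2 ≤ N * T := by
      have := sum_swap_inv P hPswap (fun p => ω p.2 ^ 2 * f p.2 ^ 2)
      rw [this]
      exact hcol
    have hsum2 : ∑ p ∈ P, c p.1 p.2 * (f p.1 * f p.2) * (η p.1 - η p.2) ^ 2
        ≤ 1 / (2 * R ^ 2) * (N * T + N * T) := by
      calc ∑ p ∈ P, c p.1 p.2 * (f p.1 * f p.2) * (η p.1 - η p.2) ^ 2
          ≤ ∑ p ∈ P, 1 / (2 * R ^ 2) * (ω p.1 ^ 2 * f p.1 ^ 2 + ω p.2 ^ 2 * f p.2 ^ 2) :=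
            Finset.sum_le_sum hpair
      _ = 1 / (2 * R ^ 2) * (∑ p ∈ P, ω p.1 ^ 2 * f p.1 ^ 2 + ∑ p ∈ P, ω p.2 ^ 2 * f p.2 ^ 2) := by
            rw [← Finset.mul_sum, Finset.sum_add_distrib]
      _ ≤ 1 / (2 * R ^ 2) * (N * T + N * T) := by
            apply mul_le_mul_of_nonneg_left (add_le_add hcol hcol2) (by positivity)
    have hx₀B2 : x₀ ∈ B2 := by
      rw [hmemB2, pdist_self]
      positivity
    have hlow : ω x₀ ^ 2 * f x₀ ^ 2 ≤ ∑ x ∈ B2, ω x ^ 2 * η x ^ 2 * f x ^ 2 := by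
      have h := Finset.single_le_sum (f := fun x => ω x ^ 2 * η x ^ 2 * f x ^ 2)
        (fun i _ => by have := hη0 i; positivity) hx₀B2
      calc ω x₀ ^ 2 * f x₀ ^ 2 = ω x₀ ^ 2 * η x₀ ^ 2 * f x₀ ^ 2 := by rw [hηx₀]; ring
      _ ≤ _ := h
    calc ω x₀ ^ 2 * f x₀ ^ 2 ≤ ∑ x ∈ B2, ω x ^ 2 * η x ^ 2 * f x ^ 2 := hlow
    _ ≤ (1 / 2) * ∑ p ∈ P, c p.1 p.2 * (f p.1 * f p.2) * (η p.1 - η p.2) ^ 2 := hstep5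
    _ ≤ (1 / 2) * (1 / (2 * R ^ 2) * (N * T + N * T)) := by
          apply mul_le_mul_of_nonneg_left hsum2 (by norm_num)
    _ = N * T / (2 * R ^ 2) := by ring
  by_contra hne
  have hεpos : 0 < ω x₀ ^ 2 * f x₀ ^ 2 := by
    have h2 : 0 < f x₀ ^ 2 := lt_of_le_of_ne (sq_nonneg _) (Ne.symm (pow_ne_zero 2 hne))
    exact mul_pos (pow_pos (hω x₀) 2) h2
  obtain ⟨n, hn⟩ := exists_nat_gt (N * T / (2 * (ω x₀ ^ 2 * f x₀ ^ 2)))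
  have hR : (0 : ℝ) < (n : ℝ) + 1 := by positivity
  have hk := key ((n : ℝ) + 1) hR
  rw [le_div_iff₀ (by positivity)] at hk
  rw [div_lt_iff₀ (by positivity)] at hn
  have hnn : (0 : ℝ) ≤ (n : ℝ) := Nat.cast_nonneg n
  nlinarith [hεpos, hnn, mul_nonneg hnn hnn,
    mul_nonneg (le_of_lt hεpos) (mul_nonneg hnn hnn), mul_nonneg (le_of_lt hεpos) hnn]
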